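/- In an almost balanced population P (n odd), suppose x_i has a zero-bit in the cold position and a one-bit in the hot position, and let x̃_i be the bit string differing from x_i exactly in the hot and cold positions. Then replacing x_i by x̃_i yields a population in which every position has exactly (n+1)/2 one-bits, i.e., the total Hamming distance becomes the maximum n((n+1)/2)^2. -/
import Mathlib


/-- Hamming distance between two bit strings. -/
def hamming {n : ℕ} (x y : Fin n → Bool) : ℕ :=
  (Finset.univ.filter (fun k => x k ≠ y k)).card

/-- Total Hamming distance of a population: sum over all pairs i < j. -/
def totalHamming {m n : ℕ} (P : Fin m → Fin n → Bool) : ℕ :=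
  ∑ p ∈ Finset.univ.filter (fun p : Fin m × Fin m => p.1 < p.2), hamming (P p.1) (P p.2)

/-- Number of one-bits of a bit string. -/
def onesCount {n : ℕ} (x : Fin n → Bool) : ℕ :=
  (Finset.univ.filter (fun k => x k = true)).card

/-- Number of individuals with a one-bit at position k. -/
def colCount {m n : ℕ} (P : Fin m → Fin n → Bool) (k : Fin n) : ℕ :=
  (Finset.univ.filter (fun i => P i k = true)).card

lemma hamming_self {n : ℕ} (x : Fin n → Bool) : hamming x x = 0 := by simp [hamming]

lemma hamming_comm {n : ℕ} (x y : Fin n → Bool) : hamming x y = hamming y x := by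
  unfold hamming; congr 1; ext k; simp [ne_comm]

lemma sum_pairs {m : ℕ} (f : Fin m → Fin m → ℕ) (hsymm : ∀ a b, f a b = f b a)
    (hdiag : ∀ a, f a a = 0) :
    ∑ p : Fin m × Fin m, f p.1 p.2 =
      2 * ∑ p ∈ Finset.univ.filter (fun p : Fin m × Fin m => p.1 < p.2), f p.1 p.2 := by
  classical
  rw [← Finset.sum_filter_add_sum_filter_not Finset.univ
      (fun p : Fin m × Fin m => p.1 < p.2) (fun p => f p.1 p.2)]
  have h1 : ∑ p ∈ Finset.univ.filter (fun p : Fin m × Fin m => ¬ p.1 < p.2), f p.1 p.2 =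
      ∑ p ∈ Finset.univ.filter (fun p : Fin m × Fin m => p.2 < p.1), f p.1 p.2 := by
    rw [← Finset.sum_filter_add_sum_filter_not
        (Finset.univ.filter (fun p : Fin m × Fin m => ¬ p.1 < p.2))
        (fun p : Fin m × Fin m => p.2 < p.1) (fun p => f p.1 p.2)]
    have h2 : (Finset.univ.filter (fun p : Fin m × Fin m => ¬ p.1 < p.2)).filter
        (fun p : Fin m × Fin m => p.2 < p.1) =
        Finset.univ.filter (fun p : Fin m × Fin m => p.2 < p.1) := by
      rw [Finset.filter_filter]
      apply Finset.filter_congr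
      intro p _
      constructor
      · rintro ⟨_, h⟩; exact h
      · intro h; exact ⟨not_lt.2 h.le, h⟩
    rw [h2]
    have h3 : ∑ p ∈ (Finset.univ.filter (fun p : Fin m × Fin m => ¬ p.1 < p.2)).filter
        (fun p : Fin m × Fin m => ¬ p.2 < p.1), f p.1 p.2 = 0 := by
      apply Finset.sum_eq_zero
      intro p hp
      simp only [Finset.mem_filter] at hp
      have : p.1 = p.2 := le_antisymm (not_lt.1 hp.2) (not_lt.1 hp.1.2)
      rw [this]; exact hdiag p.2
    rw [h3, add_zero]
  rw [h1]
  have h4 : ∑ p ∈ Finset.univ.filter (fun p : Fin m × Fin m => p.2 < p.1), f p.1 p.2 =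
      ∑ p ∈ Finset.univ.filter (fun p : Fin m × Fin m => p.1 < p.2), f p.1 p.2 := by
    apply Finset.sum_equiv (Equiv.prodComm (Fin m) (Fin m))
    · intro p; simp
    · intro p _; exact hsymm p.1 p.2
  rw [h4]; ring

lemma col_pairs {m : ℕ} (f : Fin m → Bool) :
    (Finset.univ.filter (fun p : Fin m × Fin m => f p.1 ≠ f p.2)).card =
      2 * ((Finset.univ.filter (fun a => f a = true)).card *
        (m - (Finset.univ.filter (fun a => f a = true)).card)) := by
  classical
  set c := (Finset.univ.filter (fun a => f a = true)).card with hc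
  have hcompl : (Finset.univ.filter (fun a => ¬ f a = true)).card = m - c := by
    have := Finset.card_filter_add_card_filter_not (s := (Finset.univ : Finset (Fin m)))
      (p := fun a => f a = true)
    rw [Finset.card_univ, Fintype.card_fin] at this
    omega
  rw [Finset.card_filter]
  rw [Fintype.sum_prod_type]
  have hinner : ∀ a : Fin m, (∑ b : Fin m, if f a ≠ f b then 1 else 0) =
      if f a = true then m - c else c := by
    intro a
    cases h : f a with
    | true =>
      simp only [h, if_pos rfl]
      rw [← hcompl, Finset.card_filter]
      apply Finset.sum_congr rfl
      intro b _
      cases hb : f b <;> simp [hb]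
    | false =>
      rw [if_neg (by simp), hc, Finset.card_filter]
      apply Finset.sum_congr rfl
      intro b _
      cases hb : f b <;> simp [hb]
  rw [Finset.sum_congr rfl (fun a _ => hinner a)]
  rw [Finset.sum_ite, Finset.sum_const, Finset.sum_const, smul_eq_mul, smul_eq_mul, ← hc, hcompl]
  ring

lemma totalHamming_eq {m n : ℕ} (P : Fin m → Fin n → Bool) :
    totalHamming P = ∑ k : Fin n, colCount P k * (m - colCount P k) := by
  classical
  have key : 2 * totalHamming P = 2 * ∑ k : Fin n, colCount P k * (m - colCount P k) := by
    rw [totalHamming]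
    rw [← sum_pairs (fun a b => hamming (P a) (P b)) (fun a b => hamming_comm _ _)
        (fun a => hamming_self _)]
    have expand : ∀ p : Fin m × Fin m, hamming (P p.1) (P p.2) =
        ∑ k : Fin n, if P p.1 k ≠ P p.2 k then 1 else 0 := by
      intro p; rw [hamming, Finset.card_filter]
    rw [Finset.sum_congr rfl (fun p _ => expand p), Finset.sum_comm, Finset.mul_sum]
    apply Finset.sum_congr rfl
    intro k _
    rw [← Finset.card_filter]
    exact col_pairs (fun a => P a k)
  omega


lemma colCount_update_key {m n : ℕ} (x : Fin m → Fin n → Bool) (i : Fin m)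
    (xt : Fin n → Bool) (k : Fin n) :
    colCount (Function.update x i xt) k + (if x i k = true then 1 else 0)
      = colCount x k + (if xt k = true then 1 else 0) := by
  classical
  have e1 : colCount (Function.update x i xt) k =
      (∑ a ∈ Finset.univ.erase i, if Function.update x i xt a k = true then 1 else 0)
        + (if Function.update x i xt i k = true then 1 else 0) := by
    rw [colCount, Finset.card_filter, ← Finset.sum_erase_add _ _ (Finset.mem_univ i)]
  have e2 : colCount x k =
      (∑ a ∈ Finset.univ.erase i, if x a k = true then 1 else 0)
        + (if x i k = true then 1 else 0) := by
    rw [colCount, Finset.card_filter, ← Finset.sum_erase_add _ _ (Finset.mem_univ i)]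
  have e3 : (∑ a ∈ Finset.univ.erase i, if Function.update x i xt a k = true then 1 else 0)
      = ∑ a ∈ Finset.univ.erase i, if x a k = true then 1 else 0 := by
    apply Finset.sum_congr rfl
    intro a ha
    rw [Function.update_of_ne (Finset.ne_of_mem_erase ha)]
  rw [Function.update_self] at e1
  omega

theorem stmt16 (n : ℕ) (hn : Odd n) (x : Fin (n + 1) → Fin n → Bool)
    (hlevels : ∀ j : Fin (n + 1), onesCount (x j) = j)
    (hot cold : Fin n) (hne : hot ≠ cold)
    (hhot : colCount x hot = (n + 3) / 2) (hcold : colCount x cold = (n - 1) / 2)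
    (hbal : ∀ k : Fin n, k ≠ hot → k ≠ cold → colCount x k = (n + 1) / 2)
    (i : Fin (n + 1)) (hic : x i cold = false) (hih : x i hot = true)
    (xt : Fin n → Bool)
    (hxt : xt = fun k => if k = hot ∨ k = cold then !(x i k) else x i k) :
    (∀ k : Fin n, colCount (Function.update x i xt) k = (n + 1) / 2) ∧
      totalHamming (Function.update x i xt) = n * ((n + 1) / 2) ^ 2 := by
  obtain ⟨t, ht⟩ := hn
  have hn1 : 0 < n := Fin.pos hot
  have hxthot : xt hot = false := by rw [hxt]; simp [hih]
  have hxtcold : xt cold = true := by rw [hxt]; simp [hic, Ne.symm hne]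
  have h1 : ∀ k : Fin n, colCount (Function.update x i xt) k = (n + 1) / 2 := by
    intro k
    have key := colCount_update_key x i xt k
    by_cases hk1 : k = hot
    · subst hk1
      rw [hih, hxthot, hhot] at key
      simp at key
      omega
    · by_cases hk2 : k = cold
      · subst hk2
        rw [hic, hxtcold, hcold] at key
        simp at key
        omega
      · have hxtk : xt k = x i k := by rw [hxt]; simp [hk1, hk2]
        rw [hxtk, hbal k hk1 hk2] at key
        omega
  refine ⟨h1, ?_⟩
  rw [totalHamming_eq]
  have h2 : ∀ k : Fin n, colCount (Function.update x i xt) k *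
      ((n + 1) - colCount (Function.update x i xt) k) = ((n + 1) / 2) ^ 2 := by
    intro k
    rw [h1 k]
    have : (n + 1) - (n + 1) / 2 = (n + 1) / 2 := by omega
    rw [this]; ring
  rw [Finset.sum_congr rfl (fun k _ => h2 k), Finset.sum_const, Finset.card_univ,
    Fintype.card_fin, smul_eq_mul]
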